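/- Let X₁, …, X_N be i.i.d. Rayleigh random variables with second moment μ (i.e., X_i² = μ·E_i/2 pointwise in distribution where 2X_i²/μ is chi-squared with 2 degrees of freedom), and let μ̂_N = (X₁² + ⋯ + X_N²)/N. If 0 < ε < 1, 0 < δ < 1, and N > 2(3 + 2ε)ln(2/δ)/(3ε²), then Pr{|μ̂_N − μ|/μ < ε} > 1 − δ. -/

import Mathlib

open MeasureTheory ProbabilityTheory
open Real Set
open scoped ENNReal NNReal


lemma aux_log_one_sub {x : ℝ} (hx0 : 0 ≤ x) (hx1 : x < 1) :
    Real.log (1 - x) ≤ -x - x ^ 2 / 2 := by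
  set f : ℝ → ℝ := fun y => -y - y ^ 2 / 2 - Real.log (1 - y) with hf
  have key : ∀ y ∈ Set.Ico (0:ℝ) 1, HasDerivAt f (y ^ 2 / (1 - y)) y := by
    intro y hy
    have h1 : (1:ℝ) - y ≠ 0 := by have := hy.2; intro h; linarith [sub_eq_zero.mp h]
    have hd : HasDerivAt f (-1 - (↑2 * y ^ 1) / 2 - (-1 / (1 - y))) y := by
      exact (((hasDerivAt_id y).neg).sub ((hasDerivAt_pow 2 y).div_const 2)).sub
        (((hasDerivAt_id y).const_sub 1).log h1)
    convert hd using 1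
    field_simp
    ring
  have hmono : MonotoneOn f (Set.Ico (0:ℝ) 1) := by
    apply monotoneOn_of_deriv_nonneg (convex_Ico 0 1)
    · exact fun y hy => (key y hy).continuousAt.continuousWithinAt
    · intro y hy
      rw [interior_Ico] at hy
      exact ((key y ⟨hy.1.le, hy.2⟩).differentiableAt).differentiableWithinAt
    · intro y hy
      rw [interior_Ico] at hy
      rw [(key y ⟨hy.1.le, hy.2⟩).deriv]
      have : 0 < 1 - y := by linarith [hy.2]
      positivity
  have h0 : f 0 ≤ f x := hmono ⟨le_refl 0, one_pos⟩ ⟨hx0, hx1⟩ hx0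
  simp only [hf, ne_eq, neg_zero, zero_pow, zero_div, sub_zero, Real.log_one] at h0
  norm_num at h0
  linarith

lemma aux_log_one_add {x : ℝ} (hx0 : 0 ≤ x) :
    Real.log (1 + x) ≤ x - 3 * x ^ 2 / (2 * (3 + 2 * x)) := by
  set g : ℝ → ℝ := fun y => y - 3 * y ^ 2 / (2 * (3 + 2 * y)) - Real.log (1 + y) with hg
  have key : ∀ y ∈ Set.Ici (0:ℝ), HasDerivAt g (y ^ 3 / ((1 + y) * (3 + 2 * y) ^ 2)) y := by
    intro y hy
    have hy0 : (0:ℝ) ≤ y := hy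
    have h1 : (1:ℝ) + y ≠ 0 := by positivity
    have h2 : (2:ℝ) * (3 + 2 * y) ≠ 0 := by positivity
    have hnum : HasDerivAt (fun y : ℝ => 3 * y ^ 2) (3 * (↑2 * y ^ 1)) y :=
      (hasDerivAt_pow 2 y).const_mul 3
    have hden : HasDerivAt (fun y : ℝ => 2 * (3 + 2 * y)) (2 * 2) y := by
      have : HasDerivAt (fun y : ℝ => 3 + 2 * y) 2 y := by
        simpa using ((hasDerivAt_id y).const_mul 2).const_add 3
      exact this.const_mul 2
    have hd : HasDerivAt g (1 - (3 * (↑2 * y ^ 1) * (2 * (3 + 2 * y)) - 3 * y ^ 2 * (2 * 2)) /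
        (2 * (3 + 2 * y)) ^ 2 - (1 / (1 + y))) y := by
      exact ((hasDerivAt_id y).sub (hnum.div hden h2)).sub
        (((hasDerivAt_id y).const_add 1).log h1)
    convert hd using 1
    field_simp
    ring
  have hmono : MonotoneOn g (Set.Ici (0:ℝ)) := by
    apply monotoneOn_of_deriv_nonneg (convex_Ici 0)
    · exact fun y hy => (key y hy).continuousAt.continuousWithinAt
    · intro y hy
      rw [interior_Ici] at hy
      exact ((key y (Set.mem_Ici.mpr (le_of_lt hy))).differentiableAt).differentiableWithinAt
    · intro y hy
      rw [interior_Ici] at hy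
      rw [(key y (Set.mem_Ici.mpr (le_of_lt hy))).deriv]
      have hy' : (0:ℝ) ≤ y := hy.le
      positivity
  have h0 : g 0 ≤ g x := hmono (Set.mem_Ici.mpr (le_refl 0)) (Set.mem_Ici.mpr hx0) hx0
  simp only [hg] at h0
  norm_num at h0
  linarith


lemma exponentialPDFReal_eq' (r x : ℝ) :
    exponentialPDFReal r x = if 0 ≤ x then r * exp (-(r * x)) else 0 := by
  rw [exponentialPDFReal, gammaPDFReal]
  simp only [rpow_one, Real.Gamma_one, div_one, sub_self, rpow_zero, mul_one]

lemma exp_mgf_integrable {r t : ℝ} (hr : 0 < r) (ht : t < r) :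
    Integrable (fun x => Real.exp (t * x)) (expMeasure r) ∧
    ∫ x, Real.exp (t * x) ∂(expMeasure r) = r / (r - t) := by
  have hrt : 0 < r - t := by linarith
  have hmeq : expMeasure r
      = (volume : Measure ℝ).withDensity (fun x => ((exponentialPDFReal r x).toNNReal : ℝ≥0∞)) := rfl
  have hdmeas : Measurable (fun x => (exponentialPDFReal r x).toNNReal) :=
    (measurable_exponentialPDFReal r).real_toNNReal
  -- the real-valued weighted integrand
  have hFeq : (fun x : ℝ => Real.exp (t * x) * exponentialPDFReal r x)
      = Set.indicator (Set.Ici (0:ℝ)) (fun x => r * Real.exp (-((r - t) * x))) := by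
    funext x
    rw [exponentialPDFReal_eq']
    by_cases hx : 0 ≤ x
    · rw [if_pos hx, Set.indicator_of_mem (Set.mem_Ici.mpr hx)]
      rw [show -((r - t) * x) = t * x + -(r * x) by ring, Real.exp_add]
      ring
    · rw [if_neg hx, Set.indicator_of_notMem (by simpa using hx), mul_zero]
  have hFint : Integrable (fun x : ℝ => Real.exp (t * x) * exponentialPDFReal r x) volume := by
    rw [hFeq, integrable_indicator_iff measurableSet_Ici]
    refine Integrable.const_mul ?_ r
    have h2 : IntegrableOn (fun x => Real.exp (-((r - t) * x))) (Set.Ioi (0:ℝ)) := by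
      have := exp_neg_integrableOn_Ioi 0 hrt
      refine this.congr_fun (fun x _ => by ring_nf) measurableSet_Ioi
    exact (integrableOn_Ici_iff_integrableOn_Ioi).mpr h2
  constructor
  · rw [hmeq, integrable_withDensity_iff_integrable_coe_smul hdmeas]
    refine hFint.congr ?_
    filter_upwards with x
    simp only [NNReal.smul_def, smul_eq_mul, Real.coe_toNNReal _ (exponentialPDFReal_nonneg hr x)]
    ring
  · rw [hmeq, integral_withDensity_eq_integral_smul hdmeas]
    have : ∫ x, (exponentialPDFReal r x).toNNReal • Real.exp (t * x)
        = ∫ x, Real.exp (t * x) * exponentialPDFReal r x := by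
      congr 1
      funext x
      simp only [NNReal.smul_def, smul_eq_mul, Real.coe_toNNReal _ (exponentialPDFReal_nonneg hr x)]
      ring
    rw [this, hFeq, integral_indicator measurableSet_Ici, integral_Ici_eq_integral_Ioi,
      integral_const_mul]
    have hsub : ∫ x in Set.Ioi (0:ℝ), Real.exp (-((r - t) * x))
        = (r - t)⁻¹ * ∫ x in Set.Ioi ((r - t) * 0), Real.exp (-x) := by
      have := integral_comp_mul_left_Ioi (fun u => Real.exp (-u)) 0 hrt
      simpa [smul_eq_mul] using this
    rw [hsub]
    rw [mul_zero, integral_exp_neg_Ioi_zero]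
    field_simp

set_option maxHeartbeats 1000000 in
theorem stmt_9 {Ω : Type*} [MeasurableSpace Ω] (P : Measure Ω) [IsProbabilityMeasure P]
    (N : ℕ) (μ ε δ : ℝ) (hμ : 0 < μ) (hε1 : 0 < ε) (hε2 : ε < 1)
    (hδ1 : 0 < δ) (hδ2 : δ < 1)
    (X : Fin N → Ω → ℝ) (hmeas : ∀ i, Measurable (X i))
    (hindep : iIndepFun X P)
    (hdist : ∀ i, P.map (fun ω => 2 * (X i ω) ^ 2 / μ) = expMeasure (1 / 2))
    (hN : (N : ℝ) > 2 * (3 + 2 * ε) * Real.log (2 / δ) / (3 * ε ^ 2)) :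
    P {ω | |((∑ i, (X i ω) ^ 2) / N - μ) / μ| < ε} > ENNReal.ofReal (1 - δ) := by
  have hlogpos : 0 < Real.log (2 / δ) := Real.log_pos (by rw [lt_div_iff₀ hδ1]; linarith)
  set c : ℝ := 3 * ε ^ 2 / (2 * (3 + 2 * ε)) with hcdef
  have hcpos : 0 < c := by rw [hcdef]; positivity
  have hNpos : (0:ℝ) < N := by
    rcases Nat.eq_zero_or_pos N with h | h
    · exfalso
      rw [h] at hN
      push_cast at hN
      have : 0 < 2 * (3 + 2 * ε) * Real.log (2 / δ) / (3 * ε ^ 2) := by positivity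
      linarith
    · exact_mod_cast h
  have hNne : (N:ℝ) ≠ 0 := ne_of_gt hNpos
  have hNc : Real.log (2 / δ) < (N:ℝ) * c := by
    rw [gt_iff_lt, div_lt_iff₀ (by positivity)] at hN
    rw [hcdef, mul_div_assoc', lt_div_iff₀ (by positivity)]
    nlinarith [hN]
  have hhalf : Real.exp (-((N:ℝ) * c)) < δ / 2 := by
    have h1 : -((N:ℝ) * c) < Real.log (δ / 2) := by
      have : Real.log (δ / 2) = -Real.log (2 / δ) := by
        rw [← Real.log_inv]
        congr 1
        field_simp
      rw [this]
      linarith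
    calc Real.exp (-((N:ℝ) * c)) < Real.exp (Real.log (δ / 2)) := Real.exp_lt_exp.mpr h1
    _ = δ / 2 := Real.exp_log (by positivity)
  -- the normalized variables
  set Z : Fin N → Ω → ℝ := fun i ω => 2 * (X i ω) ^ 2 / μ with hZdef
  have hZmeas : ∀ i, Measurable (Z i) :=
    fun i => (((hmeas i).pow_const 2).const_mul 2).div_const μ
  have hZindep : iIndepFun Z P := by
    have : Measurable (fun x : ℝ => 2 * x ^ 2 / μ) :=
      ((measurable_id.pow_const 2).const_mul 2).div_const μ
    exact hindep.comp (fun _ => fun x : ℝ => 2 * x ^ 2 / μ) (fun _ => this)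
  have hint : ∀ t : ℝ, t < 1/2 → ∀ i, Integrable (fun ω => Real.exp (t * Z i ω)) P := by
    intro t ht i
    have haesm : AEStronglyMeasurable (fun x => Real.exp (t * x)) (P.map (Z i)) :=
      (Real.continuous_exp.comp (continuous_const.mul continuous_id)).aestronglyMeasurable
    have h2 : Integrable (fun x => Real.exp (t * x)) (P.map (Z i)) := by
      rw [hZdef, hdist i]
      exact (exp_mgf_integrable (by norm_num) ht).1
    exact (integrable_map_measure haesm (hZmeas i).aemeasurable).mp h2
  have hmgf : ∀ t : ℝ, t < 1/2 → ∀ i, mgf (Z i) P t = (1 - 2*t)⁻¹ := by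
    intro t ht i
    have haesm : AEStronglyMeasurable (fun x => Real.exp (t * x)) (P.map (Z i)) :=
      (Real.continuous_exp.comp (continuous_const.mul continuous_id)).aestronglyMeasurable
    have h1 : mgf (Z i) P t = ∫ x, Real.exp (t * x) ∂(P.map (Z i)) :=
      (integral_map (hZmeas i).aemeasurable haesm).symm
    rw [h1, hZdef, hdist i, (exp_mgf_integrable (by norm_num) ht).2]
    have h2 : (1:ℝ) - 2*t ≠ 0 := by intro h; linarith
    field_simp
  have hmgfS : ∀ t : ℝ, t < 1/2 → mgf (∑ i, Z i) P t = ((1 - 2*t)⁻¹)^N := by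
    intro t ht
    rw [hZindep.mgf_sum hZmeas]
    simp [hmgf t ht]
  have hintS : ∀ t : ℝ, t < 1/2 → Integrable (fun ω => Real.exp (t * (∑ i, Z i) ω)) P :=
    fun t ht => hZindep.integrable_exp_mul_sum hZmeas (fun i _ => hint t ht i)
  -- upper tail
  set t₁ : ℝ := ε / (2 * (1 + ε)) with ht₁def
  have ht₁nn : 0 ≤ t₁ := by rw [ht₁def]; positivity
  have ht₁lt : t₁ < 1/2 := by
    rw [ht₁def, div_lt_iff₀ (by positivity)]
    nlinarith
  have hU : (P {ω | 2*(N:ℝ)*(1+ε) ≤ (∑ i, Z i) ω}).toReal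
      ≤ Real.exp (-t₁ * (2*(N:ℝ)*(1+ε))) * mgf (∑ i, Z i) P t₁ :=
    measure_ge_le_exp_mul_mgf (2*(N:ℝ)*(1+ε)) ht₁nn (hintS t₁ ht₁lt)
  have hUbound : (P {ω | 2*(N:ℝ)*(1+ε) ≤ (∑ i, Z i) ω}).toReal < δ / 2 := by
    refine lt_of_le_of_lt (hU.trans ?_) hhalf
    rw [hmgfS t₁ ht₁lt]
    have h0 : (1:ℝ) + ε ≠ 0 := by positivity
    have h1 : ((1:ℝ) - 2*t₁)⁻¹ = 1 + ε := by
      apply inv_eq_of_mul_eq_one_right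
      rw [ht₁def]
      field_simp
      ring
    rw [h1, show (1+ε)^N = Real.exp ((N:ℝ) * Real.log (1+ε)) by
      rw [← Real.exp_log (show (0:ℝ) < 1+ε by linarith), ← Real.exp_nat_mul, Real.log_exp]]
    rw [← Real.exp_add]
    apply Real.exp_le_exp.mpr
    have he1 : -t₁ * (2*(N:ℝ)*(1+ε)) = -((N:ℝ) * ε) := by
      rw [ht₁def]; field_simp
    rw [he1]
    have hlog := aux_log_one_add hε1.le (x := ε)
    have hkey : Real.log (1+ε) - ε ≤ -c := by rw [hcdef]; linarith
    calc -((N:ℝ)*ε) + (N:ℝ)*Real.log (1+ε) = (N:ℝ)*(Real.log (1+ε) - ε) := by ring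
    _ ≤ (N:ℝ)*(-c) := mul_le_mul_of_nonneg_left hkey hNpos.le
    _ = -((N:ℝ)*c) := by ring
  -- lower tail
  set t₂ : ℝ := -(ε / (2 * (1 - ε))) with ht₂def
  have h1me : (0:ℝ) < 1 - ε := by linarith
  have ht₂np : t₂ ≤ 0 := by rw [ht₂def]; simp; positivity
  have ht₂lt : t₂ < 1/2 := lt_of_le_of_lt ht₂np (by norm_num)
  have hL : (P {ω | (∑ i, Z i) ω ≤ 2*(N:ℝ)*(1-ε)}).toReal
      ≤ Real.exp (-t₂ * (2*(N:ℝ)*(1-ε))) * mgf (∑ i, Z i) P t₂ :=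
    measure_le_le_exp_mul_mgf (2*(N:ℝ)*(1-ε)) ht₂np (hintS t₂ ht₂lt)
  have hLbound : (P {ω | (∑ i, Z i) ω ≤ 2*(N:ℝ)*(1-ε)}).toReal < δ / 2 := by
    refine lt_of_le_of_lt (hL.trans ?_) hhalf
    rw [hmgfS t₂ ht₂lt]
    have h0 : (1:ℝ) - ε ≠ 0 := ne_of_gt h1me
    have h1 : ((1:ℝ) - 2*t₂)⁻¹ = 1 - ε := by
      apply inv_eq_of_mul_eq_one_right
      rw [ht₂def]
      field_simp
      ring
    rw [h1, show (1-ε)^N = Real.exp ((N:ℝ) * Real.log (1-ε)) by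
      rw [← Real.exp_log h1me, ← Real.exp_nat_mul, Real.log_exp]]
    rw [← Real.exp_add]
    apply Real.exp_le_exp.mpr
    have he1 : -t₂ * (2*(N:ℝ)*(1-ε)) = (N:ℝ) * ε := by
      rw [ht₂def]; field_simp
    rw [he1]
    have hlog := aux_log_one_sub hε1.le hε2
    have hcle : c ≤ ε^2/2 := by
      rw [hcdef, div_le_div_iff₀ (by positivity) (by norm_num)]
      nlinarith
    have hkey : ε + Real.log (1-ε) ≤ -c := by linarith
    calc (N:ℝ)*ε + (N:ℝ)*Real.log (1-ε) = (N:ℝ)*(ε + Real.log (1-ε)) := by ring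
    _ ≤ (N:ℝ)*(-c) := mul_le_mul_of_nonneg_left hkey hNpos.le
    _ = -((N:ℝ)*c) := by ring
  -- the event
  set A : Set Ω := {ω | |((∑ i, (X i ω) ^ 2) / N - μ) / μ| < ε} with hAdef
  have hfmeas : Measurable (fun ω => |((∑ i, (X i ω) ^ 2) / N - μ) / μ|) := by
    apply Measurable.abs
    apply Measurable.div_const
    apply Measurable.sub_const
    apply Measurable.div_const
    exact Finset.measurable_sum Finset.univ (fun i _ => (hmeas i).pow_const 2)
  have hAmeas : MeasurableSet A := measurableSet_lt hfmeas measurable_const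
  have hAc_sub : Aᶜ ⊆ {ω | 2*(N:ℝ)*(1+ε) ≤ (∑ i, Z i) ω}
      ∪ {ω | (∑ i, Z i) ω ≤ 2*(N:ℝ)*(1-ε)} := by
    intro ω hω
    have hω' : ε ≤ |((∑ i, (X i ω) ^ 2) / N - μ) / μ| := not_lt.mp hω
    set s : ℝ := ∑ i, (X i ω) ^ 2 with hsdef
    have hSv : (∑ i, Z i) ω = s * (2/μ) := by
      rw [Finset.sum_apply, hsdef, Finset.sum_mul]
      exact Finset.sum_congr rfl (fun i _ => by rw [hZdef]; ring)
    rcases le_abs.mp hω' with hcase | hcase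
    · left
      have h1 : ε * μ ≤ s / N - μ := by rwa [le_div_iff₀ hμ] at hcase
      have h2 : (ε * μ + μ) * N ≤ s := by
        rw [← le_div_iff₀ hNpos]
        linarith
      show 2*(N:ℝ)*(1+ε) ≤ (∑ i, Z i) ω
      rw [hSv, show s * (2/μ) = 2*s/μ by ring, le_div_iff₀ hμ]
      nlinarith
    · right
      have h1 : ε * μ ≤ -((s / N - μ) / μ) * μ := by nlinarith [hcase]
      have h1' : ε * μ ≤ μ - s / N := by
        have : -((s / N - μ) / μ) * μ = μ - s / N := by field_simp; ring
        linarith [h1, this.symm.le]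
      have h2 : s ≤ (μ - ε * μ) * N := by
        rw [← div_le_iff₀ hNpos]
        linarith
      show (∑ i, Z i) ω ≤ 2*(N:ℝ)*(1-ε)
      rw [hSv, show s * (2/μ) = 2*s/μ by ring, div_le_iff₀ hμ]
      nlinarith
  have hcompl : (P Aᶜ).toReal < δ := by
    have hsub : P Aᶜ ≤ P {ω | 2*(N:ℝ)*(1+ε) ≤ (∑ i, Z i) ω}
        + P {ω | (∑ i, Z i) ω ≤ 2*(N:ℝ)*(1-ε)} :=
      le_trans (measure_mono hAc_sub) (measure_union_le _ _)
    calc (P Aᶜ).toReal ≤ (P {ω | 2*(N:ℝ)*(1+ε) ≤ (∑ i, Z i) ω}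
          + P {ω | (∑ i, Z i) ω ≤ 2*(N:ℝ)*(1-ε)}).toReal := by
          apply ENNReal.toReal_mono _ hsub
          exact ENNReal.add_ne_top.mpr ⟨measure_ne_top _ _, measure_ne_top _ _⟩
    _ = (P {ω | 2*(N:ℝ)*(1+ε) ≤ (∑ i, Z i) ω}).toReal
          + (P {ω | (∑ i, Z i) ω ≤ 2*(N:ℝ)*(1-ε)}).toReal :=
        ENNReal.toReal_add (measure_ne_top _ _) (measure_ne_top _ _)
    _ < δ/2 + δ/2 := add_lt_add hUbound hLbound
    _ = δ := by ring
  have hadd : (P A).toReal + (P Aᶜ).toReal = 1 := by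
    have h := measure_add_measure_compl hAmeas (μ := P)
    rw [measure_univ] at h
    have := congrArg ENNReal.toReal h
    rwa [ENNReal.toReal_add (measure_ne_top _ _) (measure_ne_top _ _), ENNReal.toReal_one] at this
  show ENNReal.ofReal (1-δ) < P A
  rw [← ENNReal.ofReal_toReal (measure_ne_top P A)]
  rw [ENNReal.ofReal_lt_ofReal_iff (by linarith)]
  linarith
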